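/- Let D, θ be natural numbers with θ < D, and let a, b : ℕ → ℝ be nonnegative with a d = 0 for all d > D − θ and b d = 0 for all d < θ and all d > D. Then there exist a natural number δ with δ ≤ D − θ and nonnegative functions a', b' : ℕ → ℝ such that: (i) a' d + b' (d + θ) = a d + b (d + θ) for every d ∈ {0,…,D − θ} (the total amount executed from each release slot is preserved); (ii) Σ_{d=0}^{D} a' d = Σ_{d=0}^{D} a d and Σ_{d=0}^{D} b' d = Σ_{d=0}^{D} b d (the total amounts executed at each of the two execution times are preserved); (iii) a' d = 0 for all d < δ and b' d = 0 for all d > θ + δ (the earlier execution time serves only the older releases and the later execution time serves only the newer releases, i.e., the assignment follows earliest-deadline-first). -/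

import Mathlib

/-- Exchange lemma (Lemma 1 of the paper): any assignment of releases to the two
execution slots can be reshuffled into an earliest-deadline-first assignment
preserving the per-release totals and the per-execution-slot totals. -/
theorem edf_exchange (D θ : ℕ) (hθ : θ < D)
    (a b : ℕ → ℝ) (ha : ∀ d, 0 ≤ a d) (hb : ∀ d, 0 ≤ b d)
    (haD : ∀ d, D - θ < d → a d = 0)
    (hbθ : ∀ d, d < θ → b d = 0)
    (hbD : ∀ d, D < d → b d = 0) :
    ∃ (δ : ℕ) (a' b' : ℕ → ℝ),
      δ ≤ D - θ ∧
      (∀ d, 0 ≤ a' d) ∧ (∀ d, 0 ≤ b' d) ∧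
      (∀ d ∈ Finset.Icc 0 (D - θ), a' d + b' (d + θ) = a d + b (d + θ)) ∧
      (∑ d ∈ Finset.Icc 0 D, a' d = ∑ d ∈ Finset.Icc 0 D, a d) ∧
      (∑ d ∈ Finset.Icc 0 D, b' d = ∑ d ∈ Finset.Icc 0 D, b d) ∧
      (∀ d, d < δ → a' d = 0) ∧
      (∀ d, θ + δ < d → b' d = 0) := by
  classical
  set m := D - θ with hm
  have hθD : θ ≤ D := hθ.le
  have hmθ : m + θ = D := by omega
  set c : ℕ → ℝ := fun d => a d + b (d + θ) with hc
  set T : ℕ → ℝ := fun k => ∑ d ∈ Finset.Icc k m, c d with hT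
  set S : ℝ := ∑ d ∈ Finset.Icc 0 D, a d with hS
  have hcnn : ∀ d, 0 ≤ c d := fun d => add_nonneg (ha d) (hb _)
  -- S equals the sum of a over Icc 0 m
  have hSm : S = ∑ d ∈ Finset.Icc 0 m, a d := by
    rw [hS]
    refine (Finset.sum_subset ?_ ?_).symm
    · intro x hx; simp only [Finset.mem_Icc] at *; omega
    · intro x hx hnx; simp only [Finset.mem_Icc] at hx hnx
      exact haD x (by omega)
  have hSnn : 0 ≤ S := by
    rw [hSm]; exact Finset.sum_nonneg fun i _ => ha i
  have hST0 : S ≤ T 0 := by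
    rw [hSm, hT]
    exact Finset.sum_le_sum fun i _ => le_add_of_nonneg_right (hb _)
  set δ := Nat.findGreatest (fun k => S ≤ T k) m with hδ
  have hδm : δ ≤ m := Nat.findGreatest_le m
  have hPδ : S ≤ T δ := Nat.findGreatest_spec (P := fun k => S ≤ T k) (Nat.zero_le m) hST0
  have hTsplit : ∀ k, k ≤ m → T k = c k + T (k + 1) := by
    intro k hk
    have : Finset.Icc k m = insert k (Finset.Icc (k + 1) m) := by
      ext x; simp only [Finset.mem_insert, Finset.mem_Icc]; omega
    rw [hT]; simp only
    rw [this, Finset.sum_insert (by simp)]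
  have hTδ1 : T (δ + 1) ≤ S := by
    rcases eq_or_lt_of_le hδm with h | h
    · have : Finset.Icc (δ + 1) m = ∅ := by
        apply Finset.Icc_eq_empty; omega
      rw [hT]; simp only; rw [this, Finset.sum_empty]; exact hSnn
    · have := Nat.findGreatest_is_greatest (P := fun k => S ≤ T k)
        (Nat.lt_succ_self δ) (by omega)
      exact le_of_not_ge this
  -- definitions
  set a' : ℕ → ℝ := fun d =>
    if d < δ then 0 else if d = δ then S - T (δ + 1)
    else if d ≤ m then c d else 0 with ha'
  set b' : ℕ → ℝ := fun e =>
    if θ ≤ e ∧ e ≤ D then c (e - θ) - a' (e - θ) else 0 with hb'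
  have ha'nn : ∀ d, 0 ≤ a' d := by
    intro d; rw [ha']; dsimp only
    split_ifs with h1 h2 h3
    · exact le_refl 0
    · exact sub_nonneg.mpr hTδ1
    · exact hcnn d
    · exact le_refl 0
  have ha'le : ∀ d, d ≤ m → a' d ≤ c d := by
    intro d hd; rw [ha']; dsimp only
    split_ifs with h1 h2
    · exact hcnn d
    · rw [h2]
      have hts := hTsplit δ hδm
      linarith [hPδ]
    · simp [hd]
  have hb'def : ∀ d, d ≤ m → b' (d + θ) = c d - a' d := by
    intro d hd; rw [hb']; dsimp only
    have h1 : θ ≤ d + θ ∧ d + θ ≤ D := ⟨by omega, by omega⟩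
    rw [if_pos h1]
    congr 1 <;> · congr 1; omega
  have hb'nn : ∀ e, 0 ≤ b' e := by
    intro e; rw [hb']; dsimp only
    split_ifs with h1
    · have hd : e - θ ≤ m := by omega
      exact sub_nonneg.mpr (ha'le _ hd)
    · exact le_refl 0
  have ha'gt : ∀ d, m < d → a' d = 0 := by
    intro d hd; rw [ha']; dsimp only
    rw [if_neg (by omega), if_neg (by omega), if_neg (by omega)]
  have ha'eqc : ∀ d, δ < d → d ≤ m → a' d = c d := by
    intro d h1 h2; rw [ha']; dsimp only
    rw [if_neg (by omega), if_neg (by omega), if_pos h2]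
  have hsumA : ∑ d ∈ Finset.Icc 0 D, a' d = S := by
    have h1 : ∑ d ∈ Finset.Icc 0 D, a' d = ∑ d ∈ Finset.Icc δ m, a' d := by
      symm; apply Finset.sum_subset
      · intro x hx; simp only [Finset.mem_Icc] at *; omega
      · intro x hx hnx; simp only [Finset.mem_Icc] at hx hnx
        rcases Nat.lt_or_ge x δ with h | h
        · rw [ha']; dsimp only; rw [if_pos h]
        · exact ha'gt x (by omega)
    rw [h1]
    have h2 : Finset.Icc δ m = insert δ (Finset.Icc (δ + 1) m) := by
      ext x; simp only [Finset.mem_insert, Finset.mem_Icc]; omega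
    rw [h2, Finset.sum_insert (by simp)]
    have h3 : a' δ = S - T (δ + 1) := by
      rw [ha']; dsimp only; rw [if_neg (by omega), if_pos rfl]
    have h4 : ∑ d ∈ Finset.Icc (δ + 1) m, a' d = T (δ + 1) := by
      rw [hT]; dsimp only
      apply Finset.sum_congr rfl
      intro x hx; simp only [Finset.mem_Icc] at hx
      exact ha'eqc x (by omega) hx.2
    rw [h3, h4]; ring
  refine ⟨δ, a', b', hδm, ha'nn, hb'nn, ?_, ?_, ?_, ?_, ?_⟩
  · intro d hd
    simp only [Finset.mem_Icc] at hd
    rw [hb'def d hd.2]; ring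
  · -- sum a'
    rw [hsumA, hS]
  · -- sum b'
    have h1 : ∑ e ∈ Finset.Icc 0 D, b' e = ∑ e ∈ Finset.Icc θ D, b' e := by
      symm; apply Finset.sum_subset
      · intro x hx; simp only [Finset.mem_Icc] at *; omega
      · intro x hx hnx; simp only [Finset.mem_Icc] at hx hnx
        rw [hb']; dsimp only; rw [if_neg (by omega)]
    have h1b : ∑ e ∈ Finset.Icc 0 D, b e = ∑ e ∈ Finset.Icc θ D, b e := by
      symm; apply Finset.sum_subset
      · intro x hx; simp only [Finset.mem_Icc] at *; omega
      · intro x hx hnx; simp only [Finset.mem_Icc] at hx hnx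
        exact hbθ x (by omega)
    have hmap : Finset.Icc θ D = Finset.map (addRightEmbedding θ) (Finset.Icc 0 m) := by
      rw [Finset.map_add_right_Icc]; congr 1 <;> omega
    have h2 : ∑ e ∈ Finset.Icc θ D, b' e = ∑ d ∈ Finset.Icc 0 m, b' (d + θ) := by
      rw [hmap, Finset.sum_map]; rfl
    have h2b : ∑ e ∈ Finset.Icc θ D, b e = ∑ d ∈ Finset.Icc 0 m, b (d + θ) := by
      rw [hmap, Finset.sum_map]; rfl
    have h3 : ∑ d ∈ Finset.Icc 0 m, b' (d + θ)
        = ∑ d ∈ Finset.Icc 0 m, (c d - a' d) := by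
      apply Finset.sum_congr rfl
      intro x hx; simp only [Finset.mem_Icc] at hx
      exact hb'def x hx.2
    have h4 : ∑ d ∈ Finset.Icc 0 m, a' d = S := by
      rw [← hsumA]
      apply Finset.sum_subset
      · intro x hx; simp only [Finset.mem_Icc] at *; omega
      · intro x hx hnx; simp only [Finset.mem_Icc] at hx hnx
        exact ha'gt x (by omega)
    rw [h1, h2, h3, h1b, h2b, Finset.sum_sub_distrib, h4, hSm]
    have h5 : ∑ d ∈ Finset.Icc 0 m, c d
        = ∑ d ∈ Finset.Icc 0 m, a d + ∑ d ∈ Finset.Icc 0 m, b (d + θ) := by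
      rw [← Finset.sum_add_distrib]
    rw [h5]; ring
  · intro d hd; rw [ha']; dsimp only; rw [if_pos hd]
  · intro e he
    rw [hb']; dsimp only
    split_ifs with h1
    · have : a' (e - θ) = c (e - θ) := by
        rcases Nat.lt_or_ge m (e - θ) with h | h
        · exfalso; omega
        · exact ha'eqc _ (by omega) h
      rw [this]; ring
    · rfl
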